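/- Let G = (I* ∪ K, E) be a split graph with K a clique and I* a maximum independent set, and 𝓡 = {G_v : v ∈ I* ∪ K} a family of graphs. Then γ_gr(G ↩ 𝓡) = max{ Σ_{v∈I*} γ_gr(G_v) + n(G), max_{v∈K} ( γ_gr(G_v) + Σ_{w∈I*\N(v)} γ_gr(G_w) ) }, where n(G) = 1 if there exist v, w ∈ K with N(v) ∩ N(w) ∩ I* = ∅ and n(G) = 0 otherwise. -/

import Mathlib

namespace GrundyDom

/-- Closed neighborhood N[v]. -/
def cn {V : Type*} (G : SimpleGraph V) (v : V) : Set V := insert v (G.neighborSet v)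

/-- Union of closed neighborhoods of the vertices of a list. -/
def cnUnion {V : Type*} (G : SimpleGraph V) (L : List V) : Set V := ⋃ v ∈ L, cn G v

/-- Private neighborhood of `v` with respect to the first `i` entries of `S`:
`N[v] \ (N[v_1] ∪ ... ∪ N[v_i])`. -/
def PN {V : Type*} (G : SimpleGraph V) (S : List V) (i : ℕ) (v : V) : Set V :=
  cn G v \ cnUnion G (S.take i)

/-- A legal dominating sequence: distinct vertices, dominating set, and every
vertex of the sequence has a nonempty private neighborhood w.r.t. its predecessors. -/
structure IsLegal {V : Type*} (G : SimpleGraph V) (S : List V) : Prop where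
  nodup : S.Nodup
  dominates : ∀ v : V, ∃ u ∈ S, v ∈ cn G u
  legal : ∀ i : Fin S.length, (PN G S i.val (S.get i)).Nonempty

/-- The set `I_S` of vertices that footprint themselves in `S`. -/
def selfFoot {V : Type*} (G : SimpleGraph V) (S : List V) : Set V :=
  {v | ∃ i : Fin S.length, S.get i = v ∧ v ∈ PN G S i.val v}

/-- Grundy domination number: maximum length of a legal dominating sequence. -/
noncomputable def gammaGr {V : Type*} (G : SimpleGraph V) : ℕ :=
  sSup {k | ∃ S : List V, IsLegal G S ∧ S.length = k}

/-- `γ_gr(G, I)`: maximum length of a legal dominating sequence `S` with `I_S = I`. -/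
noncomputable def gammaGrOn {V : Type*} (G : SimpleGraph V) (I : Set V) : ℕ :=
  sSup {k | ∃ S : List V, IsLegal G S ∧ selfFoot G S = I ∧ S.length = k}

/-- `γ_gr^u(G)`: maximum of `γ_gr(G, I)` over independent sets `I` containing `u`. -/
noncomputable def gammaGrVert {V : Type*} (G : SimpleGraph V) (u : V) : ℕ :=
  sSup {k | ∃ I : Set V, (∀ ⦃a⦄, a ∈ I → ∀ ⦃b⦄, b ∈ I → a ≠ b → ¬ G.Adj a b) ∧
    u ∈ I ∧ k = gammaGrOn G I}

/-- Independent set of a graph. -/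
def IsIndep {V : Type*} (G : SimpleGraph V) (I : Set V) : Prop :=
  ∀ ⦃u⦄, u ∈ I → ∀ ⦃v⦄, v ∈ I → u ≠ v → ¬ G.Adj u v

/-- The X-join product `G ↩ 𝓡`: replace each vertex `v` of `G` by the graph `R v`. -/
def XJoin {V : Type*} (G : SimpleGraph V) {W : V → Type*} (R : ∀ v, SimpleGraph (W v)) :
    SimpleGraph (Σ v, W v) where
  Adj x y := G.Adj x.1 y.1 ∨ ∃ h : x.1 = y.1, (R y.1).Adj (h ▸ x.2) y.2
  symm := by
    refine ⟨?_⟩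
    rintro ⟨a, xa⟩ ⟨b, yb⟩ (h | ⟨h, hadj⟩)
    · exact Or.inl h.symm
    · dsimp at h hadj
      subst h
      exact Or.inr ⟨rfl, hadj.symm⟩
  loopless := by
    refine ⟨?_⟩
    rintro ⟨a, xa⟩ (h | ⟨h, hadj⟩)
    · exact h.ne rfl
    · exact hadj.ne rfl

/-- The lexicographic product `G ∘ H`. -/
def Lex {V W : Type*} (G : SimpleGraph V) (H : SimpleGraph W) : SimpleGraph (V × W) where
  Adj x y := G.Adj x.1 y.1 ∨ (x.1 = y.1 ∧ H.Adj x.2 y.2)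
  symm := by
    refine ⟨?_⟩
    rintro x y (h | ⟨h1, h2⟩)
    · exact Or.inl h.symm
    · exact Or.inr ⟨h1.symm, h2.symm⟩
  loopless := by
    refine ⟨?_⟩
    rintro x (h | ⟨_, h⟩)
    · exact h.ne rfl
    · exact h.ne rfl

/-- The replacement graph `G_{u ↩ H}`: replace the vertex `u` of `G` by `H`. -/
def Replace {V : Type*} (G : SimpleGraph V) (u : V) {W : Type*} (H : SimpleGraph W) :
    SimpleGraph ({v : V // v ≠ u} ⊕ W) where
  Adj x y :=
    match x, y with
    | Sum.inl a, Sum.inl b => G.Adj a.1 b.1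
    | Sum.inl a, Sum.inr _ => G.Adj a.1 u
    | Sum.inr _, Sum.inl b => G.Adj u b.1
    | Sum.inr h1, Sum.inr h2 => H.Adj h1 h2
  symm := by refine ⟨?_⟩; rintro (a|a) (b|b) h <;> exact h.symm
  loopless := by refine ⟨?_⟩; rintro (a|a) h <;> exact h.ne rfl

/-- `C_n^m`: the m-th power of the n-cycle, on vertex set `ZMod n`;
two vertices are adjacent iff their circular distance is between 1 and m. -/
def cyclePow (n m : ℕ) : SimpleGraph (ZMod n) where
  Adj i j := i ≠ j ∧ ∃ k : ℕ, 1 ≤ k ∧ k ≤ m ∧ (j = i + k ∨ i = j + k)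
  symm := by
    refine ⟨?_⟩
    rintro i j ⟨hne, k, h1, h2, h3⟩
    exact ⟨hne.symm, k, h1, h2, h3.symm⟩
  loopless := ⟨fun i h => h.1 rfl⟩

/-- `P_n^m`: the m-th power of the n-path, on vertex set `Fin n`
(vertex `i` represents the `(i+1)`-st vertex of the path);
two vertices adjacent iff their distance is between 1 and m. -/
def pathPow (n m : ℕ) : SimpleGraph (Fin n) where
  Adj i j := i ≠ j ∧ Nat.dist i.val j.val ≤ m
  symm := by
    refine ⟨?_⟩
    rintro i j ⟨hne, hd⟩
    exact ⟨hne.symm, by rwa [Nat.dist_comm]⟩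
  loopless := ⟨fun i h => h.1 rfl⟩

end GrundyDom

open GrundyDom Finset


namespace GDAux
open GrundyDom

open GrundyDom

variable {V : Type*} {G : SimpleGraph V}

lemma mem_cn {x y : V} : y ∈ cn G x ↔ y = x ∨ G.Adj x y := by
  simp [cn, SimpleGraph.mem_neighborSet]

lemma self_mem_cn {x : V} : x ∈ cn G x := by simp [mem_cn]

lemma mem_cnUnion {L : List V} {y : V} : y ∈ cnUnion G L ↔ ∃ x ∈ L, y ∈ cn G x := by
  simp [cnUnion]

lemma mem_cnUnion_take {S : List V} {i : ℕ} {y : V} :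
    y ∈ cnUnion G (S.take i) ↔ ∃ j, ∃ hj : j < S.length, j < i ∧ y ∈ cn G S[j] := by
  rw [mem_cnUnion]
  constructor
  · rintro ⟨x, hx, hy⟩
    rw [List.mem_take_iff_getElem] at hx
    obtain ⟨j, hj, rfl⟩ := hx
    exact ⟨j, (lt_min_iff.mp hj).2, (lt_min_iff.mp hj).1, hy⟩
  · rintro ⟨j, hj, hji, hy⟩
    exact ⟨S[j], List.mem_take_iff_getElem.mpr ⟨j, lt_min_iff.mpr ⟨hji, hj⟩, rfl⟩, hy⟩

/-- Legal sequence without the domination requirement. -/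
structure Pre (G : SimpleGraph V) (S : List V) : Prop where
  nodup : S.Nodup
  legal : ∀ i : Fin S.length, (PN G S i.val (S.get i)).Nonempty

lemma Pre.wit {S : List V} (h : Pre G S) :
    ∀ i, ∀ hi : i < S.length, ∃ y, y ∈ cn G S[i] ∧
      ∀ j, ∀ hj : j < S.length, j < i → y ∉ cn G S[j] := by
  intro i hi
  obtain ⟨y, hy1, hy2⟩ := h.legal ⟨i, hi⟩
  refine ⟨y, by simpa [List.get_eq_getElem] using hy1, fun j hj hji hmem => hy2 ?_⟩
  exact mem_cnUnion_take.mpr ⟨j, hj, hji, hmem⟩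

lemma pre_of_wit {S : List V} (hnd : S.Nodup)
    (h : ∀ i, ∀ hi : i < S.length, ∃ y, y ∈ cn G S[i] ∧
      ∀ j, ∀ hj : j < S.length, j < i → y ∉ cn G S[j]) : Pre G S := by
  refine ⟨hnd, fun i => ?_⟩
  obtain ⟨y, hy1, hy2⟩ := h i.1 i.2
  refine ⟨y, by simpa [List.get_eq_getElem] using hy1, fun hmem => ?_⟩
  obtain ⟨j, hj, hji, hmem⟩ := mem_cnUnion_take.mp hmem
  exact hy2 j hj hji hmem

lemma pre_nil : Pre G ([] : List V) := ⟨List.nodup_nil, fun i => absurd i.2 (by simp)⟩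

/-- Append one vertex with an uncovered private neighbor. -/
lemma Pre.append_one {S : List V} (h : Pre G S) {w y : V}
    (hy1 : y ∈ cn G w) (hy2 : ∀ s ∈ S, y ∉ cn G s) : Pre G (S ++ [w]) := by
  have hwS : w ∉ S := fun hw => hy2 w hw hy1
  refine pre_of_wit (by simp [List.nodup_append, h.nodup, hwS]; intro a ha hh; exact hwS (hh ▸ ha)) ?_
  intro i hi
  have hi : i < S.length + 1 := by simpa using hi
  rcases lt_or_ge i S.length with hiS | hiS
  · obtain ⟨z, hz1, hz2⟩ := h.wit i hiS
    refine ⟨z, by rwa [List.getElem_append_left hiS], ?_⟩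
    intro j hj hji
    have hjS : j < S.length := lt_of_lt_of_le hji (Nat.le_of_lt_succ (by omega))
    rw [List.getElem_append_left hjS]
    exact hz2 j hjS hji
  · have hieq : i = S.length := by omega
    refine ⟨y, ?_, ?_⟩
    · rw [List.getElem_append_right (by omega)]
      simpa [hieq] using hy1
    · intro j hj hji
      have hjS : j < S.length := by omega
      rw [List.getElem_append_left hjS]
      exact hy2 _ (List.getElem_mem hjS)

/-- Any pre-legal sequence extends to a dominating one. -/
lemma Pre.exists_dominating [Fintype V] {S : List V} (h : Pre G S) :
    ∃ T : List V, IsLegal G T ∧ S.length ≤ T.length := by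
  by_cases hd : ∀ v : V, ∃ u ∈ S, v ∈ cn G u
  · exact ⟨S, ⟨h.nodup, hd, h.legal⟩, le_refl _⟩
  · push_neg at hd
    obtain ⟨v, hv⟩ := hd
    have h' : Pre G (S ++ [v]) := h.append_one self_mem_cn hv
    have : Fintype.card V - (S ++ [v]).length < Fintype.card V - S.length := by
      have hlen : (S ++ [v]).length = S.length + 1 := by simp
      have := List.Nodup.length_le_card h'.nodup
      omega
    obtain ⟨T, hT, hTlen⟩ := h'.exists_dominating
    exact ⟨T, hT, le_trans (by simp) hTlen⟩
termination_by Fintype.card V - S.length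

lemma isLegal_length_le_card [Fintype V] {S : List V} (h : IsLegal G S) :
    S.length ≤ Fintype.card V := List.Nodup.length_le_card h.nodup

lemma gammaGr_set_nonempty [Fintype V] :
    {k | ∃ S : List V, IsLegal G S ∧ S.length = k}.Nonempty := by
  obtain ⟨T, hT, _⟩ := (pre_nil (G := G)).exists_dominating
  exact ⟨T.length, T, hT, rfl⟩

lemma gammaGr_set_bdd [Fintype V] :
    BddAbove {k | ∃ S : List V, IsLegal G S ∧ S.length = k} := by
  refine ⟨Fintype.card V, fun k hk => ?_⟩
  obtain ⟨S, hS, rfl⟩ := hk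
  exact isLegal_length_le_card hS

lemma isLegal_length_le_gammaGr [Fintype V] {S : List V} (h : IsLegal G S) :
    S.length ≤ gammaGr G := le_csSup gammaGr_set_bdd ⟨S, h, rfl⟩

lemma Pre.length_le_gammaGr [Fintype V] {S : List V} (h : Pre G S) :
    S.length ≤ gammaGr G := by
  obtain ⟨T, hT, hlen⟩ := h.exists_dominating
  exact le_trans hlen (isLegal_length_le_gammaGr hT)

lemma exists_isLegal_gammaGr [Fintype V] :
    ∃ S : List V, IsLegal G S ∧ S.length = gammaGr G :=
  Nat.sSup_mem gammaGr_set_nonempty gammaGr_set_bdd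

lemma one_le_gammaGr [Fintype V] [Nonempty V] : 1 ≤ gammaGr G := by
  obtain ⟨S, hS, hlen⟩ := exists_isLegal_gammaGr (G := G)
  obtain ⟨u, hu, _⟩ := hS.dominates (Classical.arbitrary V)
  rw [← hlen]
  exact List.length_pos_iff.mpr (fun h => by simp [h] at hu)

lemma gammaGr_le [Fintype V] {m : ℕ}
    (h : ∀ S : List V, IsLegal G S → S.length ≤ m) : gammaGr G ≤ m := by
  refine csSup_le gammaGr_set_nonempty ?_
  rintro k ⟨S, hS, rfl⟩
  exact h S hS


section XJ

variable {W : V → Type*} {R : ∀ v, SimpleGraph (W v)}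

/-- transport the second component along a layer equation -/
def pr {a : V} (s : Σ v, W v) (h : s.1 = a) : W a := h ▸ s.2

lemma pr_spec {a : V} (s : Σ v, W v) (h : s.1 = a) : s = ⟨a, pr s h⟩ := by
  cases s; subst h; rfl

lemma cn_xjoin_same_iff {a : V} {x y : W a} :
    (⟨a, y⟩ : Σ v, W v) ∈ cn (XJoin G R) ⟨a, x⟩ ↔ y ∈ cn (R a) x := by
  constructor
  · intro h
    rcases mem_cn.mp h with h | h
    · obtain ⟨h1, h2⟩ := Sigma.mk.inj_iff.mp h
      rw [mem_cn]
      exact Or.inl (eq_of_heq h2)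
    · rcases h with h | ⟨he, ha⟩
      · exact absurd h (G.loopless.irrefl a)
      · rw [mem_cn]
        exact Or.inr (by simpa using ha)
  · intro h
    rcases mem_cn.mp h with h | h
    · subst h; exact self_mem_cn
    · exact mem_cn.mpr (Or.inr (Or.inr ⟨rfl, by simpa using h⟩))

lemma cn_pr_iff {a : V} {s t : Σ v, W v} (hs : s.1 = a) (ht : t.1 = a) :
    t ∈ cn (XJoin G R) s ↔ pr t ht ∈ cn (R a) (pr s hs) := by
  cases' s with v x
  dsimp at hs; subst hs
  cases' t with u y
  dsimp at ht; subst ht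
  exact cn_xjoin_same_iff

lemma cn_ne_iff {s t : Σ v, W v} (hne : s.1 ≠ t.1) :
    t ∈ cn (XJoin G R) s ↔ G.Adj s.1 t.1 := by
  constructor
  · intro h
    rcases mem_cn.mp h with h | h
    · exact absurd (congrArg Sigma.fst h).symm hne
    · rcases h with h | ⟨he, _⟩
      · exact h
      · exact absurd he hne
  · intro h
    exact mem_cn.mpr (Or.inr (Or.inl h))


lemma chain_pre {W : V → Type*} {R : ∀ v, SimpleGraph (W v)}
    {S : List (Σ v, W v)} (hnd : S.Nodup) {a : V}
    (l : List (Fin S.length)) (hl : List.Pairwise (· < ·) l)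
    (hmem : ∀ i, i ∈ l → (S.get i).1 = a)
    (hwit : ∀ i, ∀ hi : i ∈ l, (∃ j ∈ l, j < i) →
      ∃ z : W a, z ∈ cn (R a) (pr (S.get i) (hmem i hi)) ∧
        ∀ j, ∀ hj : j ∈ l, j < i → z ∉ cn (R a) (pr (S.get j) (hmem j hj))) :
    Pre (R a) (l.attach.map fun j => pr (S.get j.1) (hmem j.1 j.2)) := by
  set M := l.attach.map fun j => pr (S.get j.1) (hmem j.1 j.2) with hM
  have hlen : M.length = l.length := by simp [hM]
  have hgetM : ∀ k, ∀ hk : k < l.length, ∀ hk' : k < M.length,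
      M[k]'hk' = pr (S.get l[k]) (hmem _ (l.getElem_mem hk)) := by
    intro k hk hk'
    simp [hM]
  have hget_lt : ∀ k k' : ℕ, ∀ hk : k < l.length, ∀ hk' : k' < l.length, k < k' → l[k] < l[k'] :=
    fun k k' hk hk' hkk => List.pairwise_iff_getElem.mp hl k k' hk hk' hkk
  refine pre_of_wit ?_ ?_
  · rw [List.Nodup, List.pairwise_iff_getElem]
    intro k k' hk hk' hkk
    rw [hgetM k (by omega) hk, hgetM k' (by omega) hk']
    intro heq
    rw [hlen] at hk hk'
    have hSeq : S.get l[k] = S.get l[k'] := by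
      conv_lhs => rw [pr_spec (S.get l[k]) (hmem _ (l.getElem_mem hk))]
      conv_rhs => rw [pr_spec (S.get l[k']) (hmem _ (l.getElem_mem hk'))]
      exact congrArg _ heq
    exact absurd ((List.Nodup.get_inj_iff hnd).mp hSeq) (ne_of_lt (hget_lt k k' hk hk' hkk))
  · intro k hk
    have hkl : k < l.length := by omega
    rcases Nat.eq_zero_or_pos k with hk0 | hk0
    · exact ⟨M[k], self_mem_cn, fun m hm hmk => by omega⟩
    · obtain ⟨z, hz1, hz2⟩ := hwit l[k] (l.getElem_mem hkl)
        ⟨l[0], l.getElem_mem (by omega), hget_lt 0 k (by omega) hkl hk0⟩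
      refine ⟨z, ?_, ?_⟩
      · rw [hgetM k hkl hk]
        exact hz1
      · intro m hm hmk
        rw [hgetM m (by omega) hm]
        exact hz2 l[m] (l.getElem_mem (by omega)) (hget_lt m k (by omega) hkl hmk)

section Count
variable {W : V → Type*} {R : ∀ v, SimpleGraph (W v)} [DecidableEq V]
variable {S : List (Σ v, W v)} {wit : Fin S.length → Σ v, W v}

/-- a foreign-witnessed play is adjacent (in G) to its witness layer -/
lemma wit_adj (hw1 : ∀ i, wit i ∈ cn (XJoin G R) (S.get i))
    {i : Fin S.length} (hf : (wit i).1 ≠ (S.get i).1) :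
    G.Adj (S.get i).1 (wit i).1 :=
  (cn_ne_iff (fun h => hf h.symm)).mp (hw1 i)

lemma count_sort_facts (F : Finset (Fin S.length)) :
    (F.sort (· ≤ ·)).Pairwise (· < ·) ∧ (F.sort (· ≤ ·)).length = F.card ∧
      ∀ i, i ∈ F.sort (· ≤ ·) ↔ i ∈ F :=
  ⟨F.sortedLT_sort.pairwise, F.length_sort _, fun i => F.mem_sort _⟩

lemma count_layer_le [Fintype V] [∀ v, Fintype (W v)] [∀ v, DecidableEq (W v)]
    (hnd : S.Nodup)
    (hw1 : ∀ i, wit i ∈ cn (XJoin G R) (S.get i))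
    (hw2 : ∀ i j : Fin S.length, j < i → wit i ∉ cn (XJoin G R) (S.get j)) (a : V) :
    (Finset.univ.filter fun i : Fin S.length => (S.get i).1 = a).card ≤ gammaGr (R a) := by
  classical
  set F := Finset.univ.filter fun i : Fin S.length => (S.get i).1 = a with hF
  set l := F.sort (· ≤ ·) with hls
  have hmem : ∀ i, i ∈ l → (S.get i).1 = a := by
    intro i hi
    have := (F.mem_sort _).mp hi
    rw [hF, Finset.mem_filter] at this
    exact this.2
  have hwit : ∀ i, ∀ hi : i ∈ l, (∃ j ∈ l, j < i) →
      ∃ z : W a, z ∈ cn (R a) (pr (S.get i) (hmem i hi)) ∧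
        ∀ j, ∀ hj : j ∈ l, j < i → z ∉ cn (R a) (pr (S.get j) (hmem j hj)) := by
    intro i hi ⟨j, hj, hji⟩
    have hself : (wit i).1 = (S.get i).1 := by
      by_contra hf
      have hadj : G.Adj (S.get i).1 (wit i).1 := wit_adj hw1 hf
      refine hw2 i j hji ((cn_ne_iff ?_).mpr ?_)
      · rw [hmem j hj, ← hmem i hi]
        exact G.ne_of_adj hadj
      · rw [hmem j hj, ← hmem i hi]
        exact hadj
    have hwa : (wit i).1 = a := hself.trans (hmem i hi)
    refine ⟨pr (wit i) hwa, ?_, ?_⟩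
    · exact (cn_pr_iff (hmem i hi) hwa).mp (hw1 i)
    · intro j hj hji
      exact fun hc => hw2 i j hji ((cn_pr_iff (hmem j hj) hwa).mpr hc)
  have hpre := chain_pre hnd l (F.sortedLT_sort.pairwise) hmem hwit
  have := hpre.length_le_gammaGr
  simpa [hls] using this

lemma count_layer_succ_le [Fintype V] [∀ v, Fintype (W v)] [∀ v, DecidableEq (W v)]
    (hnd : S.Nodup)
    (hw1 : ∀ i, wit i ∈ cn (XJoin G R) (S.get i))
    (hw2 : ∀ i j : Fin S.length, j < i → wit i ∉ cn (XJoin G R) (S.get j))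
    {a : V} {i0 : Fin S.length} (hfor : (wit i0).1 ≠ (S.get i0).1) (ha : (wit i0).1 = a)
    {j0 : Fin S.length} (hj0i : j0 < i0) (hj0 : (S.get j0).1 = a) :
    (Finset.univ.filter fun i : Fin S.length => (S.get i).1 = a).card + 1 ≤ gammaGr (R a) := by
  classical
  -- all plays at layer a occur before i0
  have hall : ∀ j : Fin S.length, (S.get j).1 = a → j < i0 := by
    intro j hja
    rcases lt_trichotomy j i0 with h | h | h
    · exact h
    · exfalso; subst h; exact hfor (ha.trans hja.symm)
    · exfalso
      by_cases hselfj : (wit j).1 = (S.get j).1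
      · -- self play at a after i0: contradiction with foreign adj of i0
        refine hw2 j i0 h ((cn_ne_iff ?_).mpr ?_)
        · rw [hselfj, hja, ← ha]; exact fun hc => hfor hc.symm
        · rw [hselfj, hja, ← ha]; exact wit_adj hw1 hfor
      · -- foreign play at a after i0 : contradicts first-in-layer (j0 earlier at a)
        have hadj : G.Adj (S.get j).1 (wit j).1 := wit_adj hw1 hselfj
        refine hw2 j j0 (lt_trans hj0i h) ((cn_ne_iff ?_).mpr ?_)
        · rw [hj0, ← hja]; exact G.ne_of_adj hadj
        · rw [hj0, ← hja]; exact hadj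
  set F := Finset.univ.filter fun i : Fin S.length => (S.get i).1 = a with hF
  set l := F.sort (· ≤ ·) with hls
  have hmem : ∀ i, i ∈ l → (S.get i).1 = a := by
    intro i hi
    have := (F.mem_sort _).mp hi
    rw [hF, Finset.mem_filter] at this
    exact this.2
  have hwit : ∀ i, ∀ hi : i ∈ l, (∃ j ∈ l, j < i) →
      ∃ z : W a, z ∈ cn (R a) (pr (S.get i) (hmem i hi)) ∧
        ∀ j, ∀ hj : j ∈ l, j < i → z ∉ cn (R a) (pr (S.get j) (hmem j hj)) := by
    intro i hi ⟨j, hj, hji⟩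
    have hself : (wit i).1 = (S.get i).1 := by
      by_contra hf
      have hadj : G.Adj (S.get i).1 (wit i).1 := wit_adj hw1 hf
      refine hw2 i j hji ((cn_ne_iff ?_).mpr ?_)
      · rw [hmem j hj, ← hmem i hi]; exact G.ne_of_adj hadj
      · rw [hmem j hj, ← hmem i hi]; exact hadj
    have hwa : (wit i).1 = a := hself.trans (hmem i hi)
    refine ⟨pr (wit i) hwa, (cn_pr_iff (hmem i hi) hwa).mp (hw1 i), ?_⟩
    intro j hj hji
    exact fun hc => hw2 i j hji ((cn_pr_iff (hmem j hj) hwa).mpr hc)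
  have hpre := chain_pre hnd l (F.sortedLT_sort.pairwise) hmem hwit
  have hext : Pre (R a) ((l.attach.map fun j => pr (S.get j.1) (hmem j.1 j.2)) ++ [pr (wit i0) ha]) := by
    refine hpre.append_one self_mem_cn ?_
    intro s hs
    rw [List.mem_map] at hs
    obtain ⟨⟨j, hjl⟩, _, rfl⟩ := hs
    exact fun hc => hw2 i0 j (hall j (hmem j hjl)) ((cn_pr_iff (hmem j hjl) ha).mpr hc)
  have := hext.length_le_gammaGr
  simpa [hls] using this

end Count

section Lower
variable {W : V → Type*} {R : ∀ v, SimpleGraph (W v)}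

def lift (a : V) (l : List (W a)) : List (Σ v, W v) := l.map (Sigma.mk a)

def blocks (L : List V) (F : ∀ a, List (W a)) : List (Σ v, W v) :=
  (L.map fun a => lift a (F a)).flatten

lemma mem_lift {a : V} {l : List (W a)} {s : Σ v, W v} :
    s ∈ lift a l ↔ ∃ z ∈ l, s = ⟨a, z⟩ := by
  simp only [lift, List.mem_map, eq_comm]

lemma mem_blocks {L : List V} {F : ∀ a, List (W a)} {s : Σ v, W v} :
    s ∈ blocks L F ↔ ∃ a ∈ L, s ∈ lift a (F a) := by
  simp only [blocks, List.mem_flatten, List.mem_map]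
  constructor
  · rintro ⟨_, ⟨a, ha, rfl⟩, hs⟩
    exact ⟨a, ha, hs⟩
  · rintro ⟨a, ha, hs⟩
    exact ⟨_, ⟨a, ha, rfl⟩, hs⟩

lemma layer_of_mem_blocks {L : List V} {F : ∀ a, List (W a)} {s : Σ v, W v}
    (h : s ∈ blocks L F) : s.1 ∈ L := by
  obtain ⟨a, ha, hs⟩ := mem_blocks.mp h
  obtain ⟨z, _, rfl⟩ := mem_lift.mp hs
  exact ha

lemma blocks_cons {a : V} {L : List V} {F : ∀ a, List (W a)} :
    blocks (a :: L) F = lift a (F a) ++ blocks L F := by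
  simp [blocks]

lemma length_blocks {L : List V} {F : ∀ a, List (W a)} :
    (blocks L F).length = (L.map fun a => (F a).length).sum := by
  induction L with
  | nil => simp [blocks]
  | cons a L ih => simp [blocks_cons, ih, lift]

lemma pre_append_block {A : List (Σ v, W v)} (hA : Pre (XJoin G R) A) {a : V} {l : List (W a)}
    (hl : Pre (R a) l)
    (hsep : ∀ s ∈ A, s.1 ≠ a ∧ ¬ G.Adj s.1 a) :
    Pre (XJoin G R) (A ++ lift a l) := by
  have hgetl : ∀ k, ∀ hk : k < l.length, (lift a l)[k]'(by simpa [lift] using hk) = ⟨a, l[k]⟩ := by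
    intro k hk
    simp [lift]
  refine pre_of_wit ?_ ?_
  · rw [List.nodup_append]
    refine ⟨hA.nodup, hl.nodup.map sigma_mk_injective, ?_⟩
    intro s hsA t hsl hst
    subst hst
    obtain ⟨z, _, rfl⟩ := mem_lift.mp hsl
    exact (hsep _ hsA).1 rfl
  · intro i hi
    rw [List.length_append] at hi
    rcases lt_or_ge i A.length with hiA | hiA
    · obtain ⟨y, hy1, hy2⟩ := hA.wit i hiA
      refine ⟨y, by rwa [List.getElem_append_left hiA], ?_⟩
      intro j hj hji
      rw [List.getElem_append_left (lt_of_lt_of_le hji (Nat.le_of_lt_succ (by omega)))]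
      exact hy2 j (by omega) hji
    · have hk : i - A.length < l.length := by simp [lift] at hi ⊢; omega
      obtain ⟨y, hy1, hy2⟩ := hl.wit (i - A.length) hk
      refine ⟨⟨a, y⟩, ?_, ?_⟩
      · rw [List.getElem_append_right hiA, hgetl _ hk]
        exact cn_xjoin_same_iff.mpr hy1
      · intro j hj hji
        rcases lt_or_ge j A.length with hjA | hjA
        · rw [List.getElem_append_left hjA]
          have hsep' := hsep (A[j]) (A.getElem_mem hjA)
          exact fun hc => hsep'.2 ((cn_ne_iff hsep'.1).mp hc)
        · have hjk : j - A.length < l.length := by simp [lift] at hj ⊢; omega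
          rw [List.getElem_append_right hjA, hgetl _ hjk]
          exact fun hc => hy2 _ hjk (by omega) (cn_xjoin_same_iff.mp hc)

lemma pre_blocks (L : List V) (F : ∀ a, List (W a))
    (hLadj : L.Pairwise fun a b => a ≠ b ∧ ¬ G.Adj a b)
    (hF : ∀ a ∈ L, Pre (R a) (F a))
    {A : List (Σ v, W v)} (hA : Pre (XJoin G R) A)
    (hsep : ∀ s ∈ A, ∀ a ∈ L, s.1 ≠ a ∧ ¬ G.Adj s.1 a) :
    Pre (XJoin G R) (A ++ blocks L F) := by
  induction L generalizing A with
  | nil => simpa [blocks]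
  | cons b L ih =>
    have h1 : Pre (XJoin G R) (A ++ lift b (F b)) :=
      pre_append_block hA (hF b (List.mem_cons_self))
        (fun s hs => hsep s hs b (List.mem_cons_self))
    have h2 := ih (List.Pairwise.of_cons hLadj)
      (fun a ha => hF a (List.mem_cons_of_mem _ ha)) h1 ?_
    · rw [blocks_cons, ← List.append_assoc]
      exact h2
    · intro s hs a ha
      rcases List.mem_append.mp hs with hs | hs
      · exact hsep s hs a (List.mem_cons_of_mem _ ha)
      · obtain ⟨z, _, rfl⟩ := mem_lift.mp hs
        exact (List.pairwise_cons.mp hLadj).1 a ha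

lemma mem_blocks_of {L : List V} {F : ∀ a, List (W a)} {a : V} {z : W a}
    (ha : a ∈ L) (hz : z ∈ F a) : (⟨a, z⟩ : Σ v, W v) ∈ blocks L F :=
  mem_blocks.mpr ⟨a, ha, mem_lift.mpr ⟨z, hz, rfl⟩⟩

lemma cover_self {S : List (Σ v, W v)} {b : V} {lb : List (W b)}
    (hsub : ∀ z ∈ lb, (⟨b, z⟩ : Σ v, W v) ∈ S) (hdom : IsLegal (R b) lb) (y : W b) :
    ∃ u ∈ S, (⟨b, y⟩ : Σ v, W v) ∈ cn (XJoin G R) u := by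
  obtain ⟨z, hz, hyz⟩ := hdom.dominates y
  exact ⟨⟨b, z⟩, hsub z hz, cn_xjoin_same_iff.mpr hyz⟩

lemma cover_adj {S : List (Σ v, W v)} {a b : V} (hadj : G.Adj a b) {z0 : W a}
    (hz0 : (⟨a, z0⟩ : Σ v, W v) ∈ S) (y : W b) :
    ∃ u ∈ S, (⟨b, y⟩ : Σ v, W v) ∈ cn (XJoin G R) u :=
  ⟨⟨a, z0⟩, hz0, (cn_ne_iff (G.ne_of_adj hadj)).mpr hadj⟩

lemma isLegal_pre {α : Type*} {G' : SimpleGraph α} {l : List α} (h : IsLegal G' l) :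
    Pre G' l := ⟨h.nodup, h.legal⟩

lemma exists_iv_neighbor [DecidableEq V] {G : SimpleGraph V} {K Iv : Finset V}
    (hdisj : Disjoint K Iv) (hIv : IsIndep G ↑Iv)
    (hmaxind : ∀ J : Finset V, IsIndep G ↑J → J.card ≤ Iv.card)
    {b : V} (hb : b ∈ K) : ∃ u ∈ Iv, G.Adj b u := by
  by_contra hno
  push_neg at hno
  have hind : IsIndep G ↑(insert b Iv) := by
    intro x hx y hy hxy
    simp only [Finset.coe_insert, Set.mem_insert_iff, Finset.mem_coe] at hx hy
    rcases hx with rfl | hx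
    · rcases hy with rfl | hy
      · exact absurd rfl hxy
      · exact hno y hy
    · rcases hy with rfl | hy
      · exact fun hadj => hno x hx (G.adj_symm hadj)
      · exact hIv (by simpa using hx) (by simpa using hy) hxy
  have hcard := hmaxind _ hind
  rw [Finset.card_insert_of_notMem (fun hbIv => (Finset.disjoint_left.mp hdisj) hb hbIv)] at hcard
  omega

section LowerMain
variable [Fintype V] [DecidableEq V] {G : SimpleGraph V} [DecidableRel G.Adj]
  {K Iv : Finset V}
  [∀ v, Fintype (W v)] [∀ v, Nonempty (W v)] {R : ∀ v, SimpleGraph (W v)}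

lemma pairwise_iv_toList (hIv : IsIndep G ↑Iv) {s : Finset V} (hs : s ⊆ Iv) :
    s.toList.Pairwise fun a b => a ≠ b ∧ ¬ G.Adj a b := by
  refine List.Pairwise.imp_of_mem ?_ (Finset.nodup_toList s)
  intro a b ha hb hne
  rw [Finset.mem_toList] at ha hb
  exact ⟨hne, hIv (by simpa using hs ha) (by simpa using hs hb) hne⟩

lemma lower_C1 (hpart : ∀ v, v ∈ K ∨ v ∈ Iv) (hdisj : Disjoint K Iv)
    (hK : G.IsClique ↑K) (hIv : IsIndep G ↑Iv)
    {v : V} (hv : v ∈ K) :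
    gammaGr (R v) + ∑ x ∈ Iv.filter (fun y => ¬ G.Adj v y), gammaGr (R x) ≤
      gammaGr (XJoin G R) := by
  classical
  choose F hF1 hF2 using fun a : V => exists_isLegal_gammaGr (G := R a)
  set L := (Iv.filter (fun y => ¬ G.Adj v y)).toList with hL
  have hLIv : ∀ a ∈ L, a ∈ Iv ∧ ¬ G.Adj v a := by
    intro a ha
    rw [hL, Finset.mem_toList, Finset.mem_filter] at ha
    exact ha
  set S := blocks L F ++ lift v (F v) with hSdef
  have hpre0 : Pre (XJoin G R) (([] : List (Σ v, W v)) ++ blocks L F) := by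
    refine pre_blocks L F (pairwise_iv_toList hIv (Finset.filter_subset _ _)) ?_ pre_nil ?_
    · exact fun a _ => isLegal_pre (hF1 a)
    · intro s hs
      simp at hs
  have hpre : Pre (XJoin G R) S := by
    rw [hSdef]
    refine pre_append_block (by simpa using hpre0) (isLegal_pre (hF1 v)) ?_
    intro s hs
    obtain ⟨hsIv, hsadj⟩ := hLIv s.1 (layer_of_mem_blocks hs)
    exact ⟨fun h => (Finset.disjoint_left.mp hdisj) hv (h ▸ hsIv),
      fun h => hsadj (G.adj_symm h)⟩
  -- a play in layer v
  obtain ⟨z0, hz0, _⟩ := (hF1 v).dominates (Classical.arbitrary (W v))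
  have hz0S : (⟨v, z0⟩ : Σ v, W v) ∈ S := by
    rw [hSdef]
    exact List.mem_append_right _ (mem_lift.mpr ⟨z0, hz0, rfl⟩)
  have hdom : ∀ p : Σ v, W v, ∃ u ∈ S, p ∈ cn (XJoin G R) u := by
    rintro ⟨b, y⟩
    rcases hpart b with hb | hb
    · by_cases hbv : b = v
      · subst hbv
        refine cover_self (fun z hz => ?_) (hF1 b) y
        rw [hSdef]
        exact List.mem_append_right _ (mem_lift.mpr ⟨z, hz, rfl⟩)
      · exact cover_adj (hK (by simpa using hv) (by simpa using hb) (Ne.symm hbv)) hz0S y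
    · by_cases hbadj : G.Adj v b
      · exact cover_adj hbadj hz0S y
      · refine cover_self (fun z hz => ?_) (hF1 b) y
        rw [hSdef]
        refine List.mem_append_left _ (mem_blocks_of ?_ hz)
        rw [hL, Finset.mem_toList, Finset.mem_filter]
        exact ⟨hb, hbadj⟩
  have hlen := isLegal_length_le_gammaGr ⟨hpre.nodup, hdom, hpre.legal⟩
  rw [hSdef, List.length_append, length_blocks, hL, Finset.sum_map_toList] at hlen
  have h1 : (lift v (F v)).length = gammaGr (R v) := by
    rw [lift, List.length_map, hF2]
  have h2 : ∑ x ∈ Iv.filter (fun y => ¬ G.Adj v y), (F x).length =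
      ∑ x ∈ Iv.filter (fun y => ¬ G.Adj v y), gammaGr (R x) :=
    Finset.sum_congr rfl (fun x _ => hF2 x)
  omega

lemma lower_C2 (hpart : ∀ v, v ∈ K ∨ v ∈ Iv) (hdisj : Disjoint K Iv)
    (hK : G.IsClique ↑K) (hIv : IsIndep G ↑Iv)
    (hmaxind : ∀ J : Finset V, IsIndep G ↑J → J.card ≤ Iv.card) :
    ∑ v ∈ Iv, gammaGr (R v) ≤ gammaGr (XJoin G R) := by
  classical
  choose F hF1 hF2 using fun a : V => exists_isLegal_gammaGr (G := R a)
  set S := blocks Iv.toList F with hSdef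
  have hpre : Pre (XJoin G R) (([] : List (Σ v, W v)) ++ S) := by
    refine pre_blocks _ F (pairwise_iv_toList hIv (le_refl _)) ?_ pre_nil ?_
    · exact fun a _ => isLegal_pre (hF1 a)
    · intro s hs; simp at hs
  rw [List.nil_append] at hpre
  have hmem : ∀ b ∈ Iv, ∀ z ∈ F b, (⟨b, z⟩ : Σ v, W v) ∈ S := by
    intro b hb z hz
    rw [hSdef]
    exact mem_blocks_of (Finset.mem_toList.mpr hb) hz
  have hdom : ∀ p : Σ v, W v, ∃ u ∈ S, p ∈ cn (XJoin G R) u := by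
    rintro ⟨b, y⟩
    rcases hpart b with hb | hb
    · obtain ⟨u, hu, hadj⟩ := exists_iv_neighbor hdisj hIv hmaxind hb
      obtain ⟨z0, hz0, _⟩ := (hF1 u).dominates (Classical.arbitrary (W u))
      exact cover_adj (G.adj_symm hadj) (hmem u hu z0 hz0) y
    · exact cover_self (fun z hz => hmem b hb z hz) (hF1 b) y
  have hlen := isLegal_length_le_gammaGr ⟨hpre.nodup, hdom, hpre.legal⟩
  rw [hSdef, length_blocks, Finset.sum_map_toList] at hlen
  have h2 : ∑ x ∈ Iv, (F x).length = ∑ x ∈ Iv, gammaGr (R x) :=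
    Finset.sum_congr rfl (fun x _ => hF2 x)
  omega

lemma lower_C2' (hpart : ∀ v, v ∈ K ∨ v ∈ Iv) (hdisj : Disjoint K Iv)
    (hK : G.IsClique ↑K) (hIv : IsIndep G ↑Iv)
    (hmaxind : ∀ J : Finset V, IsIndep G ↑J → J.card ≤ Iv.card)
    (hn : ∃ v ∈ K, ∃ w ∈ K, ∀ x ∈ Iv, ¬(G.Adj v x ∧ G.Adj w x)) :
    (∑ v ∈ Iv, gammaGr (R v)) + 1 ≤ gammaGr (XJoin G R) := by
  classical
  obtain ⟨v0, hv0, w0, hw0, hvw⟩ := hn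
  have hne : v0 ≠ w0 := by
    rintro rfl
    obtain ⟨u, hu, hadj⟩ := exists_iv_neighbor hdisj hIv hmaxind hv0
    exact hvw u hu ⟨hadj, hadj⟩
  have hadj0 : G.Adj v0 w0 := hK (by simpa using hv0) (by simpa using hw0) hne
  choose F hF1 hF2 using fun a : V => exists_isLegal_gammaGr (G := R a)
  set L1 := (Iv.filter (fun y => ¬ G.Adj w0 y)).toList with hL1
  set L2 := (Iv.filter (fun y => G.Adj w0 y)).toList with hL2
  set x0 : W v0 := Classical.arbitrary (W v0) with hx0
  set A := blocks L1 F ++ [(⟨v0, x0⟩ : Σ v, W v)] with hA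
  set S := A ++ blocks L2 F with hSdef
  have hL1mem : ∀ a ∈ L1, a ∈ Iv ∧ ¬ G.Adj w0 a := by
    intro a ha
    rw [hL1, Finset.mem_toList, Finset.mem_filter] at ha
    exact ha
  have hL2mem : ∀ a ∈ L2, a ∈ Iv ∧ G.Adj w0 a := by
    intro a ha
    rw [hL2, Finset.mem_toList, Finset.mem_filter] at ha
    exact ha
  have hpre1 : Pre (XJoin G R) (blocks L1 F) := by
    have := pre_blocks (G := G) L1 F (pairwise_iv_toList hIv (Finset.filter_subset _ _))
      (fun a _ => isLegal_pre (hF1 a)) pre_nil (by intro s hs; simp at hs)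
    simpa using this
  have hpreA : Pre (XJoin G R) A := by
    rw [hA]
    refine hpre1.append_one (y := (⟨w0, Classical.arbitrary (W w0)⟩ : Σ v, W v)) ?_ ?_
    · exact (cn_ne_iff (G.ne_of_adj hadj0)).mpr hadj0
    · intro s hs
      obtain ⟨hsIv, hsnadj⟩ := hL1mem s.1 (layer_of_mem_blocks hs)
      intro hc
      have hsne : s.1 ≠ w0 := fun h => (Finset.disjoint_left.mp hdisj) hw0 (h ▸ hsIv)
      exact hsnadj (G.adj_symm ((cn_ne_iff hsne).mp hc))
  have hpre : Pre (XJoin G R) S := by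
    rw [hSdef]
    refine pre_blocks L2 F (pairwise_iv_toList hIv (Finset.filter_subset _ _))
      (fun a _ => isLegal_pre (hF1 a)) hpreA ?_
    intro s hs a ha
    obtain ⟨haIv, haadj⟩ := hL2mem a ha
    rw [hA] at hs
    rcases List.mem_append.mp hs with hs | hs
    · obtain ⟨hsIv, hsnadj⟩ := hL1mem s.1 (layer_of_mem_blocks hs)
      refine ⟨fun h => hsnadj (h ▸ haadj), ?_⟩
      exact fun h => hIv (by simpa using hsIv) (by simpa using haIv)
        (G.ne_of_adj h) h
    · rw [List.mem_singleton] at hs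
      subst hs
      refine ⟨fun h => (Finset.disjoint_left.mp hdisj) hv0 ((show v0 = a from h).symm ▸ haIv), ?_⟩
      intro h
      exact hvw a haIv ⟨h, haadj⟩
  have hmem : ∀ b ∈ Iv, ∀ z ∈ F b, (⟨b, z⟩ : Σ v, W v) ∈ S := by
    intro b hb z hz
    rw [hSdef, hA]
    by_cases hbadj : G.Adj w0 b
    · exact List.mem_append_right _
        (mem_blocks_of (by rw [hL2, Finset.mem_toList, Finset.mem_filter]; exact ⟨hb, hbadj⟩) hz)
    · exact List.mem_append_left _ (List.mem_append_left _
        (mem_blocks_of (by rw [hL1, Finset.mem_toList, Finset.mem_filter]; exact ⟨hb, hbadj⟩) hz))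
  have hdom : ∀ p : Σ v, W v, ∃ u ∈ S, p ∈ cn (XJoin G R) u := by
    rintro ⟨b, y⟩
    rcases hpart b with hb | hb
    · obtain ⟨u, hu, hadj⟩ := exists_iv_neighbor hdisj hIv hmaxind hb
      obtain ⟨z0, hz0, _⟩ := (hF1 u).dominates (Classical.arbitrary (W u))
      exact cover_adj (G.adj_symm hadj) (hmem u hu z0 hz0) y
    · exact cover_self (fun z hz => hmem b hb z hz) (hF1 b) y
  have hlen := isLegal_length_le_gammaGr ⟨hpre.nodup, hdom, hpre.legal⟩
  rw [hSdef, hA, List.length_append, List.length_append, length_blocks, length_blocks,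
    hL1, hL2, Finset.sum_map_toList, Finset.sum_map_toList, List.length_singleton] at hlen
  have h1 : ∑ x ∈ Iv.filter (fun y => ¬ G.Adj w0 y), (F x).length =
      ∑ x ∈ Iv.filter (fun y => ¬ G.Adj w0 y), gammaGr (R x) :=
    Finset.sum_congr rfl (fun x _ => hF2 x)
  have h2 : ∑ x ∈ Iv.filter (fun y => G.Adj w0 y), (F x).length =
      ∑ x ∈ Iv.filter (fun y => G.Adj w0 y), gammaGr (R x) :=
    Finset.sum_congr rfl (fun x _ => hF2 x)
  have h3 : ∑ x ∈ Iv.filter (fun y => G.Adj w0 y), gammaGr (R x) +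
      ∑ x ∈ Iv.filter (fun y => ¬ G.Adj w0 y), gammaGr (R x) = ∑ x ∈ Iv, gammaGr (R x) :=
    Finset.sum_filter_add_sum_filter_not Iv _ _
  omega

end LowerMain

end Lower

end XJ
section Upper
variable {W : V → Type*} {R : ∀ v, SimpleGraph (W v)}

lemma upper_bound [Fintype V] [DecidableEq V] {G : SimpleGraph V} [DecidableRel G.Adj]
    {K Iv : Finset V}
    (hpart : ∀ v, v ∈ K ∨ v ∈ Iv) (hdisj : Disjoint K Iv)
    (hK : G.IsClique ↑K) (hIv : IsIndep G ↑Iv)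
    [∀ v, Fintype (W v)] [∀ v, Nonempty (W v)]
    {R : ∀ v, SimpleGraph (W v)}
    (S : List (Σ v, W v)) (hS : IsLegal (XJoin G R) S) :
    S.length ≤
      max ((∑ v ∈ Iv, gammaGr (R v)) +
          (if ∃ v ∈ K, ∃ w ∈ K, ∀ x ∈ Iv, ¬(G.Adj v x ∧ G.Adj w x) then 1 else 0))
        (K.sup fun v =>
          gammaGr (R v) + ∑ x ∈ Iv.filter (fun y => ¬ G.Adj v y), gammaGr (R x)) := by
  classical
  -- basic split-graph facts
  have hKnIv : ∀ v, v ∈ K → v ∉ Iv := fun v hv hv' =>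
    (Finset.disjoint_left.mp hdisj) hv hv'
  have hIvnK : ∀ v, v ∈ Iv → v ∉ K := fun v hv hv' =>
    (Finset.disjoint_left.mp hdisj) hv' hv
  have hclique : ∀ a ∈ K, ∀ b ∈ K, a ≠ b → G.Adj a b := fun a ha b hb hne =>
    hK (by simpa using ha) (by simpa using hb) hne
  have hadjK : ∀ u c, u ∈ Iv → G.Adj u c → c ∈ K := by
    intro u c hu hadj
    rcases hpart c with h | h
    · exact h
    · exact absurd hadj (hIv (by simpa using hu) (by simpa using h) (G.ne_of_adj hadj))
  -- witnesses
  have hwex : ∀ i : Fin S.length, ∃ y, y ∈ cn (XJoin G R) (S.get i) ∧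
      ∀ j : Fin S.length, j < i → y ∉ cn (XJoin G R) (S.get j) := by
    intro i
    obtain ⟨y, hy1, hy2⟩ := (Pre.mk hS.nodup hS.legal).wit i.1 i.2
    exact ⟨y, by simpa [List.get_eq_getElem] using hy1,
      fun j hj => by simpa [List.get_eq_getElem] using hy2 j.1 j.2 hj⟩
  choose wit hw1 hw2 using hwex
  -- P2 : no earlier play in a layer adjacent to the witness layer
  have hP2 : ∀ i j : Fin S.length, j < i → ¬ G.Adj (S.get j).1 (wit i).1 := by
    intro i j hj hadj
    exact hw2 i j hj ((cn_ne_iff (G.ne_of_adj hadj)).mpr hadj)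
  have hforadj : ∀ i : Fin S.length, (wit i).1 ≠ (S.get i).1 →
      G.Adj (S.get i).1 (wit i).1 := fun i h => wit_adj hw1 h
  -- foreign plays are first in their layer
  have hff : ∀ i j : Fin S.length, j < i → (wit i).1 ≠ (S.get i).1 →
      (S.get j).1 ≠ (S.get i).1 := by
    intro i j hj hf heq
    exact hP2 i j hj (heq ▸ hforadj i hf)
  -- distinct foreign plays have distinct witness layers
  have hfwu : ∀ i i' : Fin S.length, (wit i).1 = (wit i').1 →
      (wit i).1 ≠ (S.get i).1 → (wit i').1 ≠ (S.get i').1 → i = i' := by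
    intro i i' hww hf hf'
    rcases lt_trichotomy i i' with h | h | h
    · exact absurd (hww ▸ hforadj i hf) (hP2 i' i h)
    · exact h
    · exact absurd (hww ▸ hforadj i' hf') (hP2 i i' h)
  -- witness layer of a foreign play hosted in an Iv layer is in K
  have hwlK : ∀ i : Fin S.length, (S.get i).1 ∈ Iv → (wit i).1 ≠ (S.get i).1 →
      (wit i).1 ∈ K := fun i hi hf => hadjK _ _ hi (hforadj i hf)
  -- the charge function
  set chg : Fin S.length → V := fun i => if (wit i).1 ∈ Iv then (wit i).1 else (S.get i).1
    with hchg
  -- payment lemma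
  have hPL : ∀ u, u ∈ Iv →
      (∀ i : Fin S.length, (S.get i).1 = u → (wit i).1 ≠ (S.get i).1 →
        ∀ j : Fin S.length, j < i → (S.get j).1 ≠ (wit i).1) →
      (Finset.univ.filter fun i : Fin S.length => chg i = u).card ≤ gammaGr (R u) := by
    intro u hu hno
    by_cases hfw : ∃ π : Fin S.length, (wit π).1 = u ∧ (S.get π).1 ≠ u
    · obtain ⟨π, hπw, hπv⟩ := hfw
      have hπf : (wit π).1 ≠ (S.get π).1 := fun h => hπv (h.symm.trans hπw)
      have hπadj : G.Adj (S.get π).1 u := hπw ▸ hforadj π hπf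
      by_cases hbef : ∃ j : Fin S.length, (S.get j).1 = u ∧ j < π
      · obtain ⟨j0, hj0u, hj0π⟩ := hbef
        have hsucc := count_layer_succ_le (R := R) hS.nodup hw1 hw2 hπf hπw hj0π hj0u
        have hsub : (Finset.univ.filter fun i : Fin S.length => chg i = u) ⊆
            insert π (Finset.univ.filter fun i : Fin S.length => (S.get i).1 = u) := by
          intro i hi
          rw [Finset.mem_filter] at hi
          rw [hchg] at hi
          dsimp only at hi
          by_cases hwIv : (wit i).1 ∈ Iv
          · rw [if_pos hwIv] at hi
            by_cases hself : (wit i).1 = (S.get i).1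
            · exact Finset.mem_insert.mpr (Or.inr
                (Finset.mem_filter.mpr ⟨Finset.mem_univ _, hself.symm.trans hi.2⟩))
            · exact Finset.mem_insert.mpr (Or.inl
                (hfwu i π (hi.2.trans hπw.symm) hself hπf))
          · rw [if_neg hwIv] at hi
            exact Finset.mem_insert.mpr (Or.inr
              (Finset.mem_filter.mpr ⟨Finset.mem_univ _, hi.2⟩))
        calc (Finset.univ.filter fun i : Fin S.length => chg i = u).card
            ≤ (insert π (Finset.univ.filter fun i : Fin S.length => (S.get i).1 = u)).card :=
              Finset.card_le_card hsub
          _ ≤ (Finset.univ.filter fun i : Fin S.length => (S.get i).1 = u).card + 1 :=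
              Finset.card_insert_le _ _
          _ ≤ gammaGr (R u) := hsucc
      · -- no play at u before π : at most π's witness charge
        push_neg at hbef
        have hnoplay : ∀ k : Fin S.length, (S.get k).1 ≠ u := by
          intro k hk
          have hπk : π < k := by
            rcases lt_trichotomy k π with h | h | h
            · exact absurd (hbef k hk) (not_le.mpr h)
            · exact absurd (h ▸ hk) hπv
            · exact h
          by_cases hself : (wit k).1 = (S.get k).1
          · exact hP2 k π hπk (by rw [hself, hk]; exact hπadj)
          · -- foreign hosted at u after π
            have h1 : (S.get π).1 ≠ (wit k).1 := hno k hk hself π hπk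
            have h2 : (wit k).1 ∈ K := hwlK k (hk ▸ hu) hself
            have h3 : (S.get π).1 ∈ K := hadjK u _ hu (G.adj_symm hπadj)
            exact hP2 k π hπk (hclique _ h3 _ h2 h1)
        have hsub : (Finset.univ.filter fun i : Fin S.length => chg i = u) ⊆ {π} := by
          intro i hi
          rw [Finset.mem_filter] at hi
          rw [hchg] at hi; dsimp only at hi
          by_cases hwIv : (wit i).1 ∈ Iv
          · rw [if_pos hwIv] at hi
            by_cases hself : (wit i).1 = (S.get i).1
            · exact absurd (hself.symm.trans hi.2) (hnoplay i)
            · exact Finset.mem_singleton.mpr (hfwu i π (hi.2.trans hπw.symm) hself hπf)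
          · rw [if_neg hwIv] at hi
            exact absurd hi.2 (hnoplay i)
        calc _ ≤ ({π} : Finset (Fin S.length)).card := Finset.card_le_card hsub
          _ = 1 := Finset.card_singleton _
          _ ≤ gammaGr (R u) := one_le_gammaGr
    · -- no foreign witness of u
      push_neg at hfw
      have hsub : (Finset.univ.filter fun i : Fin S.length => chg i = u) ⊆
          (Finset.univ.filter fun i : Fin S.length => (S.get i).1 = u) := by
        intro i hi
        rw [Finset.mem_filter] at hi
        rw [hchg] at hi; dsimp only at hi
        by_cases hwIv : (wit i).1 ∈ Iv
        · rw [if_pos hwIv] at hi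
          exact Finset.mem_filter.mpr ⟨Finset.mem_univ _, (hfw i hi.2).symm ▸ rfl⟩
        · rw [if_neg hwIv] at hi
          exact Finset.mem_filter.mpr ⟨Finset.mem_univ _, hi.2⟩
      exact le_trans (Finset.card_le_card hsub) (count_layer_le hS.nodup hw1 hw2 u)
  -- fiberwise counting helper (Finset version, instance-free)
  have hfib : ∀ (t : Finset V) (s : Finset (Fin S.length)),
      (∀ i ∈ s, chg i ∈ t) →
      (∀ u ∈ t, (Finset.univ.filter fun i : Fin S.length => chg i = u).card ≤ gammaGr (R u)) →
      s.card ≤ ∑ u ∈ t, gammaGr (R u) := by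
    intro t s hp hbound
    have h1 : s.card = ∑ u ∈ t, (s.filter fun i => chg i = u).card :=
      Finset.card_eq_sum_card_fiberwise hp
    rw [h1]
    refine Finset.sum_le_sum fun u hu => le_trans (Finset.card_le_card ?_) (hbound u hu)
    intro i hi
    rw [Finset.mem_filter] at hi ⊢
    exact ⟨Finset.mem_univ _, hi.2⟩
  by_cases hD3K : ∃ i : Fin S.length, (wit i).1 ≠ (S.get i).1 ∧ (wit i).1 ∈ K ∧
      ∃ j : Fin S.length, j < i ∧ (S.get j).1 = (wit i).1
  · -- CASE M1 : a K layer is foreign-witnessed after having been played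
    obtain ⟨J, hJf, hJK, j0, hj0J, hj0l⟩ := hD3K
    have hKne : (Finset.univ.filter fun i : Fin S.length => (S.get i).1 ∈ K).Nonempty :=
      ⟨j0, Finset.mem_filter.mpr ⟨Finset.mem_univ _, hj0l.symm ▸ hJK⟩⟩
    obtain ⟨f1, hf1mem, hf1min'⟩ := Finset.exists_min_image
      (Finset.univ.filter fun i : Fin S.length => (S.get i).1 ∈ K) id hKne
    set a1 := (S.get f1).1 with ha1
    have hf1K : a1 ∈ K := (Finset.mem_filter.mp hf1mem).2
    have hf1min : ∀ i : Fin S.length, (S.get i).1 ∈ K → f1 ≤ i := fun i hi =>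
      hf1min' i (Finset.mem_filter.mpr ⟨Finset.mem_univ _, hi⟩)
    have hf1lt : ∀ i : Fin S.length, (S.get i).1 ∈ K → (S.get i).1 ≠ a1 → f1 < i := by
      intro i hi hne
      rcases lt_or_eq_of_le (hf1min i hi) with h | h
      · exact h
      · exact absurd ((congrArg (fun j => (S.get j).1) h).symm.trans ha1.symm) hne
    have hCL1 : ∀ i : Fin S.length, (S.get i).1 ∈ K → (wit i).1 = (S.get i).1 →
        (S.get i).1 = a1 := by
      intro i hi hself
      by_contra hne
      exact hP2 i f1 (hf1lt i hi hne)
        (hself.symm ▸ hclique a1 hf1K _ hi (Ne.symm hne))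
    have hf1ltJ : f1 < J := lt_of_le_of_lt (hf1min j0 (hj0l.symm ▸ hJK)) hj0J
    have hM1a : (wit J).1 = a1 := by
      by_contra hne
      exact hP2 J f1 hf1ltJ (hclique a1 hf1K _ hJK (fun h => hne h.symm))
    have hM1u : ∀ i : Fin S.length, (wit i).1 ≠ (S.get i).1 → (wit i).1 = a1 → i = J :=
      fun i hif hia => hfwu i J (hia.trans hM1a.symm) hif hJf
    have hD3a1 : ∀ i : Fin S.length, (wit i).1 ≠ (S.get i).1 →
        (∃ j : Fin S.length, j < i ∧ (S.get j).1 = (wit i).1) → (wit i).1 ∈ K → i = J := by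
      rintro i hif ⟨j, hji, hjl⟩ hiK
      apply hM1u i hif
      by_contra hne
      exact hP2 i f1 (lt_of_le_of_lt (hf1min j (hjl.symm ▸ hiK)) hji)
        (hclique a1 hf1K _ hiK (fun h => hne h.symm))
    have hM1c := count_layer_succ_le (R := R) hS.nodup hw1 hw2 hJf hM1a hj0J (hj0l.trans hM1a)
    have hCL5 : ∀ k : Fin S.length, (S.get k).1 ∈ Iv → G.Adj a1 (S.get k).1 → k = J := by
      intro k hkIv hkadj
      rcases lt_trichotomy k J with h | h | h
      · exact absurd (hM1a.symm ▸ G.adj_symm hkadj) (hP2 J k h)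
      · exact h
      · exfalso
        by_cases hself : (wit k).1 = (S.get k).1
        · exact hP2 k j0 (lt_trans hj0J h) (by rw [hj0l, hM1a, hself]; exact hkadj)
        · have hwK : (wit k).1 ∈ K := hwlK k hkIv hself
          have hwa : (wit k).1 = a1 := by
            by_contra hwa
            exact hP2 k j0 (lt_trans hj0J h)
              (by rw [hj0l, hM1a]; exact hclique a1 hf1K _ hwK (fun hh => hwa hh.symm))
          exact absurd (hM1u k hself hwa) (ne_of_gt h)
    have hEX : ∀ i : Fin S.length, chg i ∈ K ∨ (chg i ∈ Iv ∧ G.Adj a1 (chg i)) →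
        (S.get i).1 = a1 ∨ i = J := by
      intro i hi
      rw [hchg] at hi; dsimp only at hi
      by_cases hwIv : (wit i).1 ∈ Iv
      · rw [if_pos hwIv] at hi
        rcases hi with hiK | ⟨hiIv, hiadj⟩
        · exact absurd hwIv (hKnIv _ hiK)
        · by_cases hself : (wit i).1 = (S.get i).1
          · exact Or.inr (hCL5 i (hself ▸ hwIv) (hself ▸ hiadj))
          · left
            by_contra hne
            exact hP2 i f1 (hf1lt i (hadjK _ _ hwIv (G.adj_symm (hforadj i hself))) hne) hiadj
      · rw [if_neg hwIv] at hi
        have hwK : (wit i).1 ∈ K := (hpart _).resolve_right hwIv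
        rcases hi with hiK | ⟨hiIv, hiadj⟩
        · by_cases hself : (wit i).1 = (S.get i).1
          · exact Or.inl (hCL1 i hiK hself)
          · by_cases hwa : (wit i).1 = a1
            · exact Or.inr (hM1u i hself hwa)
            · left
              by_contra hne
              exact hP2 i f1 (hf1lt i hiK hne) (hclique a1 hf1K _ hwK (fun h => hwa h.symm))
        · exact Or.inr (hCL5 i hiIv hiadj)
    set EX : Finset (Fin S.length) :=
      Finset.univ.filter (fun i : Fin S.length => chg i ∈ K ∨ (chg i ∈ Iv ∧ G.Adj a1 (chg i)))
      with hEXdef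
    have hcompl : EX.card + EXᶜ.card = S.length := by
      rw [Finset.card_add_card_compl, Fintype.card_fin]
    have hEXcard : EX.card ≤ gammaGr (R a1) := by
      refine le_trans (Finset.card_le_card (fun i hi => ?_))
        (le_trans (Finset.card_insert_le J _) hM1c)
      rw [hEXdef, Finset.mem_filter] at hi
      rcases hEX i hi.2 with h | h
      · exact Finset.mem_insert.mpr (Or.inr (Finset.mem_filter.mpr ⟨Finset.mem_univ _, h⟩))
      · exact Finset.mem_insert.mpr (Or.inl h)
    have hrest : EXᶜ.card ≤ ∑ u ∈ Iv.filter (fun y => ¬ G.Adj a1 y), gammaGr (R u) := by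
      refine hfib _ _ ?_ ?_
      · intro i hi
        rw [Finset.mem_compl, hEXdef, Finset.mem_filter] at hi
        push_neg at hi
        have hi' := hi (Finset.mem_univ i)
        rcases hpart (chg i) with h | h
        · exact absurd h hi'.1
        · exact Finset.mem_filter.mpr ⟨h, hi'.2 h⟩
      · intro u hu
        rw [Finset.mem_filter] at hu
        refine hPL u hu.1 ?_
        intro i hiu hif j hji heq
        have hiJ : i = J := hD3a1 i hif ⟨j, hji, heq⟩ (hwlK i (hiu.symm ▸ hu.1) hif)
        subst hiJ
        exact hu.2 (hiu ▸ G.adj_symm (hM1a ▸ hforadj i hif))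
    refine le_trans ?_ (le_max_right _ _)
    refine le_trans ?_ (Finset.le_sup (f := fun v =>
      gammaGr (R v) + ∑ x ∈ Iv.filter (fun y => ¬ G.Adj v y), gammaGr (R x)) hf1K)
    show S.length ≤ gammaGr (R a1) + ∑ x ∈ Iv.filter (fun y => ¬ G.Adj a1 y), gammaGr (R x)
    omega
  · -- CASE M2 : no such event
    have hPLall : ∀ u ∈ Iv,
        (Finset.univ.filter fun i : Fin S.length => chg i = u).card ≤ gammaGr (R u) := by
      intro u hu
      refine hPL u hu ?_
      intro i hiu hif j hji heq
      exact hD3K ⟨i, hif, hwlK i (hiu.symm ▸ hu) hif, j, hji, heq⟩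
    by_cases hKp : ∃ i : Fin S.length, (S.get i).1 ∈ K
    · obtain ⟨iK, hiK⟩ := hKp
      have hKne : (Finset.univ.filter fun i : Fin S.length => (S.get i).1 ∈ K).Nonempty :=
        ⟨iK, Finset.mem_filter.mpr ⟨Finset.mem_univ _, hiK⟩⟩
      obtain ⟨f1, hf1mem, hf1min'⟩ := Finset.exists_min_image
        (Finset.univ.filter fun i : Fin S.length => (S.get i).1 ∈ K) id hKne
      set a1 := (S.get f1).1 with ha1
      have hf1K : a1 ∈ K := (Finset.mem_filter.mp hf1mem).2
      have hf1min : ∀ i : Fin S.length, (S.get i).1 ∈ K → f1 ≤ i := fun i hi =>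
        hf1min' i (Finset.mem_filter.mpr ⟨Finset.mem_univ _, hi⟩)
      have hf1lt : ∀ i : Fin S.length, (S.get i).1 ∈ K → (S.get i).1 ≠ a1 → f1 < i := by
        intro i hi hne
        rcases lt_or_eq_of_le (hf1min i hi) with h | h
        · exact h
        · exact absurd ((congrArg (fun j => (S.get j).1) h).symm.trans ha1.symm) hne
      have hCL1 : ∀ i : Fin S.length, (S.get i).1 ∈ K → (wit i).1 = (S.get i).1 →
          (S.get i).1 = a1 := by
        intro i hi hself
        by_contra hne
        exact hP2 i f1 (hf1lt i hi hne)
          (hself.symm ▸ hclique a1 hf1K _ hi (Ne.symm hne))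
      have hCL2 : ∀ i : Fin S.length, (S.get i).1 ∈ K → (wit i).1 ≠ (S.get i).1 →
          (wit i).1 ∈ K → i = f1 := by
        intro i hi hif hwK
        by_contra hne
        have hlt : f1 < i := lt_of_le_of_ne (hf1min i hi) (fun h => hne h.symm)
        have hwa : (wit i).1 = a1 := by
          by_contra hwa
          exact hP2 i f1 hlt (hclique a1 hf1K _ hwK (fun h => hwa h.symm))
        exact hD3K ⟨i, hif, hwK, f1, hlt, hwa.symm⟩
      by_cases hsig : ∃ s0 : Fin S.length, (S.get s0).1 = a1 ∧ (wit s0).1 = a1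
      · -- M2.b1 : a self play at a1 exists → bound by term2(a1)
        obtain ⟨s0, hs0v, hs0w⟩ := hsig
        have hCL4 : ∀ k : Fin S.length, (S.get k).1 ∈ Iv → G.Adj a1 (S.get k).1 → False := by
          intro k hkIv hkadj
          rcases lt_trichotomy k s0 with h | h | h
          · exact hP2 s0 k h (hs0w.symm ▸ G.adj_symm hkadj)
          · subst h; exact hIvnK _ hkIv (hs0v.symm ▸ hf1K)
          · by_cases hself : (wit k).1 = (S.get k).1
            · exact hP2 k s0 h (by rw [hs0v, hself]; exact hkadj)
            · have hwK : (wit k).1 ∈ K := hwlK k hkIv hself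
              have hwa : (wit k).1 = a1 := by
                by_contra hwa
                exact hP2 k s0 h
                  (by rw [hs0v]; exact hclique a1 hf1K _ hwK (fun hh => hwa hh.symm))
              exact hD3K ⟨k, hself, hwK, s0, h, hs0v.trans hwa.symm⟩
        have hEX2 : ∀ i : Fin S.length, chg i ∈ K ∨ (chg i ∈ Iv ∧ G.Adj a1 (chg i)) →
            (S.get i).1 = a1 := by
          intro i hi
          rw [hchg] at hi; dsimp only at hi
          by_cases hwIv : (wit i).1 ∈ Iv
          · rw [if_pos hwIv] at hi
            rcases hi with hiK | ⟨hiIv, hiadj⟩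
            · exact absurd hwIv (hKnIv _ hiK)
            · by_cases hself : (wit i).1 = (S.get i).1
              · exact absurd (hself ▸ hiadj) (fun h => hCL4 i (hself ▸ hwIv) h)
              · by_contra hne
                exact hP2 i f1 (hf1lt i (hadjK _ _ hwIv (G.adj_symm (hforadj i hself))) hne) hiadj
          · rw [if_neg hwIv] at hi
            have hwK : (wit i).1 ∈ K := (hpart _).resolve_right hwIv
            rcases hi with hiK | ⟨hiIv, hiadj⟩
            · by_cases hself : (wit i).1 = (S.get i).1
              · exact hCL1 i hiK hself
              · first
                | (rw [hCL2 i hiK hself hwK]; exact ha1.symm)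
                | rw [hCL2 i hiK hself hwK]
            · exact absurd hiadj (fun h => hCL4 i hiIv h)
        set EX : Finset (Fin S.length) :=
          Finset.univ.filter (fun i : Fin S.length => chg i ∈ K ∨ (chg i ∈ Iv ∧ G.Adj a1 (chg i)))
          with hEXdef
        have hcompl : EX.card + EXᶜ.card = S.length := by
          rw [Finset.card_add_card_compl, Fintype.card_fin]
        have hEXcard : EX.card ≤ gammaGr (R a1) := by
          refine le_trans (Finset.card_le_card (fun i hi => ?_))
            (count_layer_le hS.nodup hw1 hw2 a1)
          rw [hEXdef, Finset.mem_filter] at hi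
          exact Finset.mem_filter.mpr ⟨Finset.mem_univ _, hEX2 i hi.2⟩
        have hrest : EXᶜ.card ≤ ∑ u ∈ Iv.filter (fun y => ¬ G.Adj a1 y), gammaGr (R u) := by
          refine hfib _ _ ?_ ?_
          · intro i hi
            rw [Finset.mem_compl, hEXdef, Finset.mem_filter] at hi
            push_neg at hi
            have hi' := hi (Finset.mem_univ i)
            rcases hpart (chg i) with h | h
            · exact absurd h hi'.1
            · exact Finset.mem_filter.mpr ⟨h, hi'.2 h⟩
          · intro u hu
            rw [Finset.mem_filter] at hu
            exact hPLall u hu.1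
        refine le_trans ?_ (le_max_right _ _)
        refine le_trans ?_ (Finset.le_sup (f := fun v =>
          gammaGr (R v) + ∑ x ∈ Iv.filter (fun y => ¬ G.Adj v y), gammaGr (R x)) hf1K)
        show S.length ≤ gammaGr (R a1) + ∑ x ∈ Iv.filter (fun y => ¬ G.Adj a1 y), gammaGr (R x)
        omega
      · -- no self play at a1
        have hKBf1 : ∀ i : Fin S.length, chg i ∈ K →
            i = f1 ∧ (wit i).1 ≠ (S.get i).1 ∧ (wit i).1 ∈ K := by
          intro i hi
          rw [hchg] at hi; dsimp only at hi
          by_cases hwIv : (wit i).1 ∈ Iv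
          · rw [if_pos hwIv] at hi; exact absurd hwIv (hKnIv _ hi)
          · rw [if_neg hwIv] at hi
            have hwK : (wit i).1 ∈ K := (hpart _).resolve_right hwIv
            by_cases hself : (wit i).1 = (S.get i).1
            · exact absurd ⟨hCL1 i hi hself, hself.trans (hCL1 i hi hself)⟩
                (fun hh => hsig ⟨i, hh⟩)
            · exact ⟨hCL2 i hi hself hwK, hself, hwK⟩
        set EX : Finset (Fin S.length) :=
          Finset.univ.filter (fun i : Fin S.length => chg i ∈ K) with hEXdef
        have hcompl : EX.card + EXᶜ.card = S.length := by
          rw [Finset.card_add_card_compl, Fintype.card_fin]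
        have hEXK1 : EX.card ≤ 1 := by
          refine le_trans (Finset.card_le_card (fun i hi => ?_))
            (le_of_eq (Finset.card_singleton f1))
          rw [hEXdef, Finset.mem_filter] at hi
          exact Finset.mem_singleton.mpr (hKBf1 i hi.2).1
        by_cases hcK : (wit f1).1 ≠ (S.get f1).1 ∧ (wit f1).1 ∈ K
        · by_cases hn : ∀ x ∈ Iv, ¬(G.Adj a1 x ∧ G.Adj (wit f1).1 x)
          · -- n(G) = 1, bound by term1
            refine le_trans ?_ (le_max_left _ _)
            rw [if_pos ⟨a1, hf1K, (wit f1).1, hcK.2, hn⟩]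
            have hrest : EXᶜ.card ≤ ∑ u ∈ Iv, gammaGr (R u) := by
              refine hfib _ _ ?_ (fun u hu => hPLall u hu)
              intro i hi
              rw [Finset.mem_compl, hEXdef, Finset.mem_filter] at hi
              push_neg at hi
              exact (hpart (chg i)).resolve_left (hi (Finset.mem_univ i))
            omega
          · push_neg at hn
            obtain ⟨x, hxIv, hxa1, hxc1⟩ := hn
            have hCL6 : ∀ k : Fin S.length, (S.get k).1 ≠ x := by
              intro k hk
              rcases lt_trichotomy k f1 with h | h | h
              · exact hP2 f1 k h (by rw [hk]; exact G.adj_symm hxc1)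
              · subst h
                exact hIvnK x hxIv ((ha1.trans hk) ▸ hf1K)
              · by_cases hself : (wit k).1 = (S.get k).1
                · exact hP2 k f1 h (by rw [hself, hk]; exact hxa1)
                · have hwK : (wit k).1 ∈ K := hwlK k (hk.symm ▸ hxIv) hself
                  have hwa : (wit k).1 = a1 := by
                    by_contra hwa
                    exact hP2 k f1 h (hclique a1 hf1K _ hwK (fun hh => hwa hh.symm))
                  exact hD3K ⟨k, hself, hwK, f1, h, hwa.symm⟩
            have hCaX : ∀ i : Fin S.length, chg i ≠ x := by
              intro i hi
              rw [hchg] at hi; dsimp only at hi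
              by_cases hwIv : (wit i).1 ∈ Iv
              · rw [if_pos hwIv] at hi
                by_cases hself : (wit i).1 = (S.get i).1
                · exact hCL6 i (hself.symm.trans hi)
                · have hhostK : (S.get i).1 ∈ K :=
                    hadjK _ _ hwIv (G.adj_symm (hforadj i hself))
                  by_cases hne : (S.get i).1 = a1
                  · have hif1 : i = f1 := by
                      rcases lt_or_eq_of_le (hf1min i hhostK) with h | h
                      · exact absurd (ha1.symm ▸ hne.symm) (hff i f1 h hself)
                      · exact h.symm
                    subst hif1
                    exact hIvnK x hxIv (hi ▸ hcK.2)
                  · exact hP2 i f1 (hf1lt i hhostK hne) (by rw [hi]; exact hxa1)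
              · rw [if_neg hwIv] at hi
                exact hCL6 i hi
            refine le_trans ?_ (le_max_left _ _)
            refine le_trans ?_ (Nat.le_add_right _ _)
            have hrestE : EXᶜ.card ≤ ∑ u ∈ Iv.erase x, gammaGr (R u) := by
              refine hfib _ _ ?_ ?_
              · intro i hi
                rw [Finset.mem_compl, hEXdef, Finset.mem_filter] at hi
                push_neg at hi
                exact Finset.mem_erase.mpr ⟨hCaX i,
                  (hpart (chg i)).resolve_left (hi (Finset.mem_univ i))⟩
              · intro u hu
                exact hPLall u (Finset.mem_erase.mp hu).2
            have hsum : ∑ u ∈ Iv.erase x, gammaGr (R u) + gammaGr (R x) =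
                ∑ u ∈ Iv, gammaGr (R u) := by
              rw [add_comm]
              exact Finset.add_sum_erase Iv (fun u => gammaGr (R u)) hxIv
            have hgx : 1 ≤ gammaGr (R x) := one_le_gammaGr
            omega
        · -- M2.a : no K charges at all
          have hEX0 : EX.card = 0 := by
            rw [Finset.card_eq_zero, hEXdef]
            ext i
            simp only [Finset.mem_filter, Finset.notMem_empty, iff_false, not_and]
            intro _ hi
            obtain ⟨hif1, hif, hwK⟩ := hKBf1 i hi
            exact hcK (hif1 ▸ ⟨hif, hwK⟩)
          refine le_trans ?_ (le_max_left _ _)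
          refine le_trans ?_ (Nat.le_add_right _ _)
          have hrest : EXᶜ.card ≤ ∑ u ∈ Iv, gammaGr (R u) := by
            refine hfib _ _ ?_ (fun u hu => hPLall u hu)
            intro i hi
            rw [Finset.mem_compl, hEXdef, Finset.mem_filter] at hi
            push_neg at hi
            exact (hpart (chg i)).resolve_left (hi (Finset.mem_univ i))
          omega
    · -- no play in any K layer
      refine le_trans ?_ (le_max_left _ _)
      refine le_trans ?_ (Nat.le_add_right _ _)
      push_neg at hKp
      have hchgIv : ∀ i : Fin S.length, chg i ∈ Iv := by
        intro i
        rw [hchg]; dsimp only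
        by_cases hwIv : (wit i).1 ∈ Iv
        · rw [if_pos hwIv]; exact hwIv
        · rw [if_neg hwIv]
          exact (hpart _).resolve_left (hKp i)
      have h0 := hfib Iv Finset.univ (fun i _ => hchgIv i) (fun u hu => hPL u hu (by
        intro i hiu hif j hji heq
        exact absurd (heq.symm ▸ hwlK i (hiu.symm ▸ hu) hif) (hKp j)))
      calc S.length = (Finset.univ : Finset (Fin S.length)).card := by
            rw [Finset.card_univ, Fintype.card_fin]
        _ ≤ _ := h0

end Upper

end GDAux

/-- for a split graph `G = (I* ∪ K, E)` with `|I*| = α(G)`,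
`γ_gr(G ↩ 𝓡) = max { Σ_{v ∈ I*} γ_gr(G_v) + n(G),
max_{v ∈ K} (γ_gr(G_v) + Σ_{w ∈ I* \\ N(v)} γ_gr(G_w)) }`. -/
theorem stmt17 {V : Type*} [Fintype V] [DecidableEq V] (G : SimpleGraph V) [DecidableRel G.Adj] (K Iv : Finset V)
    (hpart : ∀ v, v ∈ K ∨ v ∈ Iv) (hdisj : Disjoint K Iv)
    (hK : G.IsClique ↑K) (hIv : IsIndep G ↑Iv)
    (hmaxind : ∀ J : Finset V, IsIndep G ↑J → J.card ≤ Iv.card)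
    {W : V → Type*} [∀ v, Fintype (W v)] [∀ v, Nonempty (W v)]
    (R : ∀ v, SimpleGraph (W v)) :
    gammaGr (XJoin G R) =
      max ((∑ v ∈ Iv, gammaGr (R v)) + (if ∃ v ∈ K, ∃ w ∈ K, ∀ x ∈ Iv, ¬(G.Adj v x ∧ G.Adj w x) then 1 else 0))
        (K.sup fun v =>
          gammaGr (R v) + ∑ x ∈ Iv.filter (fun y => ¬ G.Adj v y), gammaGr (R x)) := by
  classical
  apply le_antisymm
  · exact GDAux.gammaGr_le (fun S hS => GDAux.upper_bound hpart hdisj hK hIv S hS)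
  · rw [max_le_iff]
    constructor
    · by_cases hn : ∃ v ∈ K, ∃ w ∈ K, ∀ x ∈ Iv, ¬(G.Adj v x ∧ G.Adj w x)
      · rw [if_pos hn]
        exact GDAux.lower_C2' hpart hdisj hK hIv hmaxind hn
      · rw [if_neg hn]
        simpa using GDAux.lower_C2 hpart hdisj hK hIv hmaxind
    · rw [Finset.sup_le_iff]
      intro v hv
      exact GDAux.lower_C1 hpart hdisj hK hIv hv
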